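/- arXiv:2205.13039 — 2 statements merged into one kernel-verified Lean document; each statement's English description precedes it below -/
import Mathlib

section
/- With X* and Q* as defined, MenuGap(X*,Q*) = ∞; that is, the partial sums of ∑_{(ℓ,j)} gap_{ℓ,j}/‖x_{ℓ,j}‖₁ (taken in lexicographic order of (ℓ,j), ℓ ≥ 2, 0 ≤ j ≤ n_ℓ−1) diverge to +∞. Consequently MenuGap(X*) = ∞. -/
open scoped BigOperators ENNReal NNReal

noncomputable section

namespace Stmt16

/-- Valuation / allocation vectors over 2 items. -/
abbrev V2 := Fin 2 → ℝ

/-- Dot product. -/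
def dot (x y : V2) : ℝ := ∑ t, x t * y t

/-- ℓ¹ norm. -/
def norm1 (x : V2) : ℝ := ∑ t, |x t|

/-- `n_ℓ := ℓ·⌈(ln ℓ)²⌉ + 1`. -/
def nl (l : ℕ) : ℕ := l * ⌈(Real.log l) ^ 2⌉₊ + 1

/-- `θ_ℓ := π / (2(n_ℓ − 1))`. -/
def θ (l : ℕ) : ℝ := Real.pi / (2 * ((nl l : ℝ) - 1))

/-- `α := ∑_{m=2}^∞ 1/(m (ln m)²)`. -/
def α : ℝ := ∑' m : ℕ, if 2 ≤ m then 1 / (m * (Real.log m) ^ 2) else 0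

/-- `δ_ℓ := 1/(α ℓ (ln ℓ)²)`. -/
def δ (l : ℕ) : ℝ := 1 / (α * l * (Real.log l) ^ 2)

/-- `cot x := cos x / sin x`. -/
def cot (x : ℝ) : ℝ := Real.cos x / Real.sin x

/-- `z_ℓ := ∑_{m=2}^ℓ δ_m`. -/
def zl (l : ℕ) : ℝ := ∑ m ∈ Finset.Icc 2 l, δ m

/-- `z_{ℓ,j} := 1 − δ_ℓ·cot((j+1)θ_ℓ)` for `j ≤ n_ℓ − 2`, and `z_{ℓ,n_ℓ−1} := 1`. -/
def zlj (l j : ℕ) : ℝ :=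
  if j = nl l - 1 then 1 else 1 - δ l * cot (((j : ℝ) + 1) * θ l)

/-- The point `x_{ℓ,j}` of the layered construction. -/
def xstar (p : ℕ × ℕ) : V2 :=
  if Even p.1 then ![Real.cos (p.2 * θ p.1), Real.sin (p.2 * θ p.1)]
  else ![Real.sin (p.2 * θ p.1), Real.cos (p.2 * θ p.1)]

/-- Valid (layer, position) indices: `ℓ ≥ 2`, `0 ≤ j ≤ n_ℓ − 1`. -/
def validIdx (p : ℕ × ℕ) : Prop := 2 ≤ p.1 ∧ p.2 < nl p.1

/-- Lexicographic order on indices: `(ℓ',j')` comes before `(ℓ,j)`. -/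
def lexBefore (p q : ℕ × ℕ) : Prop := p.1 < q.1 ∨ (p.1 = q.1 ∧ p.2 < q.2)

-- ### basics
lemma dot_eval (c s : ℝ) (y : V2) : dot ![c, s] y = c * y 0 + s * y 1 := by
  simp [dot, Fin.sum_univ_two]

lemma dot_zero (x : V2) : dot x 0 = 0 := by simp [dot]

/-- the N in the layer: nl l = N l + 1 -/
def N (l : ℕ) : ℕ := l * ⌈(Real.log l) ^ 2⌉₊

lemma nl_eq (l : ℕ) : nl l = N l + 1 := rfl

lemma two_le_N {l : ℕ} (hl : 2 ≤ l) : 2 ≤ N l := by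
  have h1 : 1 ≤ ⌈(Real.log l) ^ 2⌉₊ := by
    rw [Nat.one_le_ceil_iff]
    have : (1:ℝ) < l := by exact_mod_cast lt_of_lt_of_le one_lt_two hl
    have := Real.log_pos (show (1:ℝ) < l by exact_mod_cast lt_of_lt_of_le one_lt_two hl)
    positivity
  calc 2 = 2 * 1 := by ring
  _ ≤ l * ⌈(Real.log l) ^ 2⌉₊ := Nat.mul_le_mul hl h1

lemma l_le_N {l : ℕ} (hl : 2 ≤ l) : l ≤ N l := by
  have h1 : 1 ≤ ⌈(Real.log l) ^ 2⌉₊ := by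
    rw [Nat.one_le_ceil_iff]
    have : (1:ℝ) < l := by exact_mod_cast lt_of_lt_of_le one_lt_two hl
    have := Real.log_pos (show (1:ℝ) < l by exact_mod_cast lt_of_lt_of_le one_lt_two hl)
    positivity
  calc l = l * 1 := by ring
  _ ≤ l * ⌈(Real.log l) ^ 2⌉₊ := Nat.mul_le_mul le_rfl h1

lemma theta_eq {l : ℕ} : θ l = Real.pi / (2 * (N l : ℝ)) := by
  simp [θ, nl_eq]

lemma theta_pos {l : ℕ} (hl : 2 ≤ l) : 0 < θ l := by
  rw [theta_eq]
  have h2 : (0:ℝ) < N l := by exact_mod_cast lt_of_lt_of_le two_pos (two_le_N hl)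
  positivity

lemma N_mul_theta {l : ℕ} (hl : 2 ≤ l) : (N l : ℝ) * θ l = Real.pi / 2 := by
  have h2 : (0:ℝ) < N l := by exact_mod_cast lt_of_lt_of_le two_pos (two_le_N hl)
  rw [theta_eq]; field_simp

lemma angle_le {l : ℕ} (hl : 2 ≤ l) {j : ℕ} (hj : j ≤ N l) :
    (j : ℝ) * θ l ≤ Real.pi / 2 := by
  rw [← N_mul_theta hl]
  exact mul_le_mul_of_nonneg_right (by exact_mod_cast hj) (theta_pos hl).le

lemma angle_nonneg {l : ℕ} (hl : 2 ≤ l) (j : ℕ) : 0 ≤ (j : ℝ) * θ l :=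
  mul_nonneg (Nat.cast_nonneg _) (theta_pos hl).le

lemma sin_angle_nonneg {l : ℕ} (hl : 2 ≤ l) {j : ℕ} (hj : j ≤ N l) :
    0 ≤ Real.sin ((j : ℝ) * θ l) :=
  Real.sin_nonneg_of_nonneg_of_le_pi (angle_nonneg hl j)
    ((angle_le hl hj).trans (by linarith [Real.pi_pos]))

lemma cos_angle_nonneg {l : ℕ} (hl : 2 ≤ l) {j : ℕ} (hj : j ≤ N l) :
    0 ≤ Real.cos ((j : ℝ) * θ l) :=
  Real.cos_nonneg_of_mem_Icc ⟨by linarith [angle_nonneg hl j, Real.pi_pos], angle_le hl hj⟩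

lemma sin_angle_pos {l : ℕ} (hl : 2 ≤ l) {j : ℕ} (hj0 : 1 ≤ j) (hj : j ≤ N l) :
    0 < Real.sin ((j : ℝ) * θ l) := by
  apply Real.sin_pos_of_pos_of_lt_pi
  · have : (1:ℝ) ≤ j := by exact_mod_cast hj0
    nlinarith [theta_pos hl]
  · have := angle_le hl hj
    linarith [Real.pi_pos]

lemma sin_theta_identity {l : ℕ} (j : ℕ) :
    Real.sin (θ l) = Real.sin (((j:ℝ) + 1) * θ l) * Real.cos ((j:ℝ) * θ l)
      - Real.cos (((j:ℝ) + 1) * θ l) * Real.sin ((j:ℝ) * θ l) := by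
  rw [← Real.sin_sub]; ring_nf

-- cot antitone on (0, π/2]
lemma cot_anti {a b : ℝ} (ha : 0 < a) (hab : a ≤ b) (hb : b ≤ Real.pi / 2) :
    Real.cos b / Real.sin b ≤ Real.cos a / Real.sin a := by
  have hsa : 0 < Real.sin a := Real.sin_pos_of_pos_of_lt_pi ha
    (lt_of_le_of_lt (hab.trans hb) (by linarith [Real.pi_pos]))
  have hsb : 0 < Real.sin b := Real.sin_pos_of_pos_of_lt_pi (lt_of_lt_of_le ha hab)
    (lt_of_le_of_lt hb (by linarith [Real.pi_pos]))
  have hca : 0 ≤ Real.cos a := Real.cos_nonneg_of_mem_Icc ⟨by linarith [Real.pi_pos], hab.trans hb⟩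
  have hcb : 0 ≤ Real.cos b := Real.cos_nonneg_of_mem_Icc ⟨by linarith [Real.pi_pos], hb⟩
  have hc : Real.cos b ≤ Real.cos a := by
    apply Real.cos_le_cos_of_nonneg_of_le_pi ha.le _ hab
    linarith [Real.pi_pos]
  have hs : Real.sin a ≤ Real.sin b := by
    apply Real.sin_le_sin_of_le_of_le_pi_div_two _ hb hab
    linarith
  exact div_le_div₀ hca hc hsa hs


-- ### summability and α
def f0 (m : ℕ) : ℝ := if 2 ≤ m then 1 / (m * (Real.log m) ^ 2) else 0

lemma f0_nonneg (m : ℕ) : 0 ≤ f0 m := by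
  unfold f0; split
  · positivity
  · exact le_rfl

lemma f0_key {m : ℕ} (hm : 2 ≤ m) :
    f0 m ≤ 4 * (1 / Real.log m - 1 / Real.log (m + 1)) := by
  have hm1 : (1:ℝ) < m := by exact_mod_cast lt_of_lt_of_le one_lt_two hm
  have hm0 : (0:ℝ) < m := by linarith
  set a := Real.log m with ha_def
  set b := Real.log (m + 1) with hb_def
  have ha : 0 < a := Real.log_pos hm1
  have hb : 0 < b := Real.log_pos (by linarith)
  have hab : a ≤ b := Real.log_le_log hm0 (by linarith)
  have h2 : b ≤ 2 * a := by
    have hm2 : (2:ℝ) ≤ m := by exact_mod_cast hm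
    have h' : ((m:ℝ) + 1) ≤ (m:ℝ) ^ 2 := by nlinarith
    calc b ≤ Real.log ((m:ℝ)^2) := Real.log_le_log (by linarith) h'
    _ = 2 * a := by rw [Real.log_pow]; push_cast; ring
  have h3 : 1 / ((m:ℝ) + 1) ≤ b - a := by
    have hlog : Real.log ((m:ℝ) / (m+1)) ≤ (m:ℝ)/(m+1) - 1 :=
      Real.log_le_sub_one_of_pos (by positivity)
    have he : Real.log ((m:ℝ) / (m+1)) = a - b :=
      Real.log_div (by positivity) (by positivity)
    rw [he] at hlog
    have he2 : (m:ℝ)/(m+1) - 1 = - (1/((m:ℝ)+1)) := by field_simp; ring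
    rw [he2] at hlog; linarith
  have key : 1 / a - 1 / b = (b - a) / (a * b) := by field_simp
  have e2 : (1/((m:ℝ)+1)) / (a*(2*a)) ≤ (b - a) / (a * b) :=
    div_le_div₀ (by linarith) h3 (by positivity) (mul_le_mul_of_nonneg_left h2 ha.le)
  have e3 : f0 m ≤ 4 * ((1/((m:ℝ)+1)) / (a*(2*a))) := by
    unfold f0; rw [if_pos hm]
    have he : 4*((1/((m:ℝ)+1))/(a*(2*a))) = 2/(((m:ℝ)+1)*a^2) := by
      field_simp; ring
    rw [he, div_le_div_iff₀ (by positivity) (by positivity)]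
    nlinarith [sq_nonneg a, ha, hm0]
  calc f0 m ≤ 4 * ((1/((m:ℝ)+1)) / (a*(2*a))) := e3
  _ ≤ 4 * ((b - a) / (a * b)) := by linarith
  _ = 4 * (1/a - 1/b) := by rw [key]

lemma sum_f0_le (n : ℕ) : ∑ i ∈ Finset.range (n+2), f0 i
    ≤ 4 / Real.log 2 - 4 / Real.log (n+2) := by
  induction n with
  | zero =>
    norm_num [Finset.sum_range_succ, f0]
  | succ n ih =>
    rw [Finset.sum_range_succ]
    have hk := f0_key (m := n + 2) (by omega)
    push_cast at hk ⊢
    have h1 : ((n:ℝ)+2+1 : ℝ) = (n:ℝ)+1+2 := by ring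
    rw [h1] at hk
    have e1 : 4/Real.log ((n:ℝ)+2) = 4*(1/Real.log ((n:ℝ)+2)) := by ring
    have e2 : 4/Real.log ((n:ℝ)+1+2) = 4*(1/Real.log ((n:ℝ)+1+2)) := by ring
    rw [e1] at ih
    rw [e2]
    linarith

lemma summable_f0 : Summable f0 := by
  apply summable_of_sum_range_le f0_nonneg (c := 4 / Real.log 2)
  intro n
  have h1 : ∑ i ∈ Finset.range n, f0 i ≤ ∑ i ∈ Finset.range (n+2), f0 i := by
    apply Finset.sum_le_sum_of_subset_of_nonneg
    · exact Finset.range_subset_range.2 (by omega)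
    · intro i _ _; exact f0_nonneg i
  have h2 := sum_f0_le n
  have h3 : 0 ≤ 4 / Real.log ((n:ℝ)+2) := by
    have : (0:ℝ) ≤ Real.log ((n:ℝ)+2) := Real.log_nonneg (by push_cast; linarith [Nat.cast_nonneg (α := ℝ) n])
    positivity
  linarith

lemma alpha_pos : 0 < α := by
  have h2 : f0 2 ≤ α := Summable.le_tsum summable_f0 2 (fun j _ => f0_nonneg j)
  have : 0 < f0 2 := by
    unfold f0; rw [if_pos le_rfl]
    have := Real.log_pos (show (1:ℝ) < (2:ℕ) by norm_num)
    positivity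
  linarith


-- ### δ, zl, zlj
lemma delta_nonneg (l : ℕ) : 0 ≤ δ l := by
  unfold δ
  have h : 0 ≤ α * l * (Real.log l) ^ 2 := by
    have := alpha_pos
    positivity
  positivity

lemma delta_pos {l : ℕ} (hl : 2 ≤ l) : 0 < δ l := by
  unfold δ
  have h1 : (1:ℝ) < l := by exact_mod_cast lt_of_lt_of_le one_lt_two hl
  have h2 := Real.log_pos h1
  have := alpha_pos
  positivity

lemma zl_le {m L : ℕ} (h : m ≤ L) : zl m ≤ zl L := by
  apply Finset.sum_le_sum_of_subset_of_nonneg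
  · exact Finset.Icc_subset_Icc le_rfl h
  · exact fun i _ _ => delta_nonneg i

lemma zl_step {m l : ℕ} (hm : 2 ≤ m) (hml : m < l) : zl m + δ l ≤ zl l := by
  have hnot : l ∉ Finset.Icc 2 m := by simp; omega
  have : zl m + δ l = ∑ i ∈ insert l (Finset.Icc 2 m), δ i := by
    rw [Finset.sum_insert hnot]; unfold zl; ring
  rw [this]
  apply Finset.sum_le_sum_of_subset_of_nonneg
  · intro i hi
    simp only [Finset.mem_insert, Finset.mem_Icc] at hi ⊢
    omega
  · exact fun i _ _ => delta_nonneg i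

lemma delta_le_zl {l : ℕ} (hl : 2 ≤ l) : δ l ≤ zl l := by
  have : δ l = ∑ i ∈ {l}, δ i := by simp
  rw [this]
  apply Finset.sum_le_sum_of_subset_of_nonneg
  · intro i hi; simp at hi; simp [hi]; omega
  · exact fun i _ _ => delta_nonneg i

lemma zl_nonneg (l : ℕ) : 0 ≤ zl l :=
  Finset.sum_nonneg fun i _ => delta_nonneg i

lemma zlj_le_one {l j : ℕ} (hl : 2 ≤ l) (hj : j < nl l) : zlj l j ≤ 1 := by
  unfold zlj
  split
  · exact le_rfl
  · rename_i hne
    have hjN : j + 1 ≤ N l := by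
      have : nl l - 1 = N l := rfl
      omega
    have hang : ((j:ℝ) + 1) * θ l ≤ Real.pi / 2 := by
      have := angle_le hl (j := j+1) hjN
      push_cast at this
      convert this using 2
    have hpos : 0 < ((j:ℝ) + 1) * θ l := by
      have := theta_pos hl
      positivity
    have hcot : 0 ≤ cot (((j:ℝ) + 1) * θ l) := by
      unfold cot
      have hs : 0 < Real.sin (((j:ℝ)+1) * θ l) :=
        Real.sin_pos_of_pos_of_lt_pi hpos (lt_of_le_of_lt hang (by linarith [Real.pi_pos]))
      have hc : 0 ≤ Real.cos (((j:ℝ)+1) * θ l) :=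
        Real.cos_nonneg_of_mem_Icc ⟨by linarith [Real.pi_pos], hang⟩
      positivity
    nlinarith [delta_nonneg l]



/-- `Q` is the allocation sequence `Q*`: on even layers `q_{ℓ,j} = (z_ℓ, z_{ℓ,j})`;
on odd layers `q_{ℓ,j}` is a vector among `q_0 = (0,0)` and `{q_{ℓ',j'} : ℓ' < ℓ}`
maximizing `x_{ℓ,j}·q`. -/
def isQstar (Q : ℕ × ℕ → V2) : Prop :=
  (∀ p : ℕ × ℕ, validIdx p → Even p.1 → Q p = ![zl p.1, zlj p.1 p.2]) ∧
  (∀ p : ℕ × ℕ, validIdx p → ¬ Even p.1 →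
    (Q p = 0 ∨ ∃ p', validIdx p' ∧ p'.1 < p.1 ∧ Q p = Q p') ∧
    (∀ p', validIdx p' → p'.1 < p.1 → dot (xstar p) (Q p') ≤ dot (xstar p) (Q p)) ∧
    0 ≤ dot (xstar p) (Q p))

/-- `gap_{ℓ,j} := x_{ℓ,j}·q_{ℓ,j} − max_{q} x_{ℓ,j}·q`, the maximum over `q_0 = (0,0)`
and all `q_{ℓ',j'}` with `(ℓ',j')` lexicographically before `(ℓ,j)`. -/
def gapStar (Q : ℕ × ℕ → V2) (p : ℕ × ℕ) : ℝ :=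
  dot (xstar p) (Q p) -
    sSup (insert (0 : ℝ)
      {y | ∃ p', validIdx p' ∧ lexBefore p' p ∧ y = dot (xstar p) (Q p')})

-- ### structure of Q values
lemma struct (Q : ℕ × ℕ → V2) (hQ : isQstar Q) : ∀ (p : ℕ × ℕ), validIdx p →
    Q p = 0 ∨ ∃ m k, 2 ≤ m ∧ Even m ∧ m ≤ p.1 ∧ k < nl m ∧ Q p = ![zl m, zlj m k] := by
  suffices H : ∀ L (p : ℕ × ℕ), p.1 ≤ L → validIdx p →
      Q p = 0 ∨ ∃ m k, 2 ≤ m ∧ Even m ∧ m ≤ p.1 ∧ k < nl m ∧ Q p = ![zl m, zlj m k] by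
    intro p hp; exact H p.1 p le_rfl hp
  intro L
  induction L with
  | zero => intro p hpL hp; exact absurd hp.1 (by omega)
  | succ L ih =>
    intro p hpL hp
    by_cases he : Even p.1
    · exact Or.inr ⟨p.1, p.2, hp.1, he, le_rfl, hp.2, hQ.1 p hp he⟩
    · rcases (hQ.2 p hp he).1 with h0 | ⟨p', hv', hlt, heq⟩
      · exact Or.inl h0
      · rcases ih p' (by omega) hv' with h0 | ⟨m, k, hm, hme, hmle, hk, heq'⟩
        · exact Or.inl (heq ▸ h0)
        · exact Or.inr ⟨m, k, hm, hme, by omega, hk, heq ▸ heq'⟩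

lemma xstar_even {l j : ℕ} (he : Even l) :
    xstar (l, j) = ![Real.cos ((j:ℝ) * θ l), Real.sin ((j:ℝ) * θ l)] := by
  simp [xstar, he]

lemma zlj_formula {l j : ℕ} (hj : j < N l) :
    zlj l j = 1 - δ l * (Real.cos (((j:ℝ)+1) * θ l) / Real.sin (((j:ℝ)+1) * θ l)) := by
  unfold zlj cot
  have hne : ¬ (j = nl l - 1) := by
    have h : nl l = N l + 1 := rfl
    omega
  rw [if_neg hne]

-- ### the key even-layer gap lower bound
lemma gap_lb_even (Q : ℕ × ℕ → V2) (hQ : isQstar Q) {l j : ℕ}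
    (hl : 2 ≤ l) (he : Even l) (hj : j < N l) :
    δ l * Real.sin (θ l) / Real.sin (((j:ℝ)+1) * θ l) ≤ gapStar Q (l, j) := by
  set c0 := Real.cos ((j:ℝ) * θ l) with hc0_def
  set s0 := Real.sin ((j:ℝ) * θ l) with hs0_def
  set c1 := Real.cos (((j:ℝ)+1) * θ l) with hc1_def
  set s1 := Real.sin (((j:ℝ)+1) * θ l) with hs1_def
  set d := δ l with hd_def
  set z := zl l with hz_def
  set g := d * Real.sin (θ l) / s1 with hg_def
  have hjN : j ≤ N l := hj.le
  have hs1 : 0 < s1 := by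
    have := sin_angle_pos hl (j := j+1) (by omega) (by omega)
    push_cast at this
    exact this
  have hc0 : 0 ≤ c0 := cos_angle_nonneg hl hjN
  have hs0 : 0 ≤ s0 := sin_angle_nonneg hl hjN
  have hdpos : 0 < d := delta_pos hl
  have hsinθ : Real.sin (θ l) = s1 * c0 - c1 * s0 := sin_theta_identity j
  have hzd : d ≤ z := delta_le_zl hl
  have hQl : Q (l, j) = ![z, zlj l j] := hQ.1 (l, j) ⟨hl, by show j < nl l; rw [nl_eq]; omega⟩ he
  have hD : dot (xstar (l, j)) (Q (l, j)) = c0 * z + s0 * zlj l j := by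
    rw [xstar_even he, dot_eval, hQl]
    simp [hc0_def, hs0_def]
  have hkey : c0 * z + s0 * zlj l j - g = c0 * (z - d) + s0 := by
    rw [zlj_formula hj, hg_def, hsinθ]
    rw [← hc1_def, ← hs1_def, ← hd_def]
    field_simp
    ring
  have hDg0 : 0 ≤ c0 * (z - d) + s0 := by
    have : 0 ≤ z - d := by linarith
    positivity
  unfold gapStar
  rw [hD, le_sub_comm]
  apply Real.sSup_le _ (by rw [hkey]; exact hDg0)
  intro y hy
  rw [hkey]
  rcases hy with rfl | ⟨p', hv', hlex, rfl⟩
  · exact hDg0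
  rcases hlex with hlt | ⟨heq1, hlt2⟩
  · -- earlier layer
    rcases struct Q hQ p' hv' with h0 | ⟨m, k, hm2, hme, hmle, hk, heqQ⟩
    · rw [h0, dot_zero]; exact hDg0
    · have hy' : dot (xstar (l, j)) (Q p') = c0 * zl m + s0 * zlj m k := by
        rw [xstar_even he, dot_eval, heqQ]; simp [hc0_def, hs0_def]
      rw [hy']
      have h1 : zl m ≤ z - d := by
        have := zl_step hm2 (lt_of_le_of_lt hmle hlt)
        linarith
      have h2 : zlj m k ≤ 1 := zlj_le_one hm2 hk
      have := add_le_add (mul_le_mul_of_nonneg_left h1 hc0) (mul_le_mul_of_nonneg_left h2 hs0)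
      linarith
  · -- same layer, earlier j
    have hv2 : validIdx p' := hv'
    have hQp' : Q p' = ![z, zlj l p'.2] := by
      have := hQ.1 p' hv' (by rw [heq1]; exact he)
      rw [this, heq1, hz_def]
    have hy' : dot (xstar (l, j)) (Q p') = c0 * z + s0 * zlj l p'.2 := by
      rw [xstar_even he, dot_eval, hQp']; simp [hc0_def, hs0_def]
    rw [hy']
    set j' := p'.2 with hj'_def
    have hj'j : j' < j := hlt2
    have hj'N : j' < N l := by omega
    have hs0pos : 0 < s0 := by
      have := sin_angle_pos hl (j := j) (by omega) hjN
      exact this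
    -- cot monotonicity
    have hcot : c0 / s0 ≤ Real.cos (((j':ℝ)+1) * θ l) / Real.sin (((j':ℝ)+1) * θ l) := by
      apply cot_anti
      · have := theta_pos hl
        positivity
      · have hle : ((j':ℝ) + 1) ≤ (j:ℝ) := by
          have : (j' + 1 : ℕ) ≤ j := hj'j
          exact_mod_cast this
        exact mul_le_mul_of_nonneg_right hle (theta_pos hl).le
      · exact angle_le hl hjN
    set c1' := Real.cos (((j':ℝ)+1) * θ l) with hc1'_def
    set s1' := Real.sin (((j':ℝ)+1) * θ l) with hs1'_def
    have hs1' : 0 < s1' := by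
      have := sin_angle_pos hl (j := j'+1) (by omega) (by omega)
      push_cast at this
      exact this
    have hA : c0 ≤ s0 * (c1'/s1') := by
      calc c0 = s0 * (c0/s0) := by field_simp
      _ ≤ s0 * (c1'/s1') := mul_le_mul_of_nonneg_left hcot hs0
    have hzlj' : zlj l j' = 1 - d * (c1'/s1') := zlj_formula hj'N
    have hexp : (c0 * z + s0 * zlj l j) - g - (c0 * z + s0 * zlj l j')
        = d * (s0 * (c1'/s1') - c0) := by
      rw [zlj_formula hj, hzlj', hg_def, hsinθ]
      rw [← hc1_def, ← hs1_def, ← hd_def]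
      field_simp
      ring
    have hfin : 0 ≤ d * (s0 * (c1'/s1') - c0) :=
      mul_nonneg hdpos.le (by linarith)
    linarith [hexp, hkey]


lemma zlj_last {l : ℕ} : zlj l (N l) = 1 := by
  unfold zlj
  rw [if_pos]
  have h : nl l = N l + 1 := rfl
  omega

lemma gap_nonneg_even_last (Q : ℕ × ℕ → V2) (hQ : isQstar Q) {l : ℕ}
    (hl : 2 ≤ l) (he : Even l) : 0 ≤ gapStar Q (l, N l) := by
  have hcos : Real.cos ((N l : ℝ) * θ l) = 0 := by
    rw [N_mul_theta hl, Real.cos_pi_div_two]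
  have hsin : Real.sin ((N l : ℝ) * θ l) = 1 := by
    rw [N_mul_theta hl, Real.sin_pi_div_two]
  have hdot : ∀ y : V2, dot (xstar (l, N l)) y = y 1 := by
    intro y
    rw [xstar_even he, dot_eval, hcos, hsin]
    ring
  have hQl : Q (l, N l) = ![zl l, zlj l (N l)] :=
    hQ.1 (l, N l) ⟨hl, by show N l < nl l; rw [nl_eq]; omega⟩ he
  have hD : dot (xstar (l, N l)) (Q (l, N l)) = 1 := by
    rw [hdot, hQl]
    simp [zlj_last]
  unfold gapStar
  rw [hD, sub_nonneg]
  apply Real.sSup_le _ zero_le_one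
  intro y hy
  rcases hy with rfl | ⟨p', hv', _, rfl⟩
  · exact zero_le_one
  rw [hdot]
  rcases struct Q hQ p' hv' with h0 | ⟨m, k, hm2, _, _, hk, heqQ⟩
  · rw [h0]; simp
  · rw [heqQ]
    simpa using zlj_le_one hm2 hk

lemma gap_nonneg_odd (Q : ℕ × ℕ → V2) (hQ : isQstar Q) {p : ℕ × ℕ}
    (hv : validIdx p) (ho : ¬ Even p.1) : 0 ≤ gapStar Q p := by
  obtain ⟨hstr, hmax, hpos⟩ := hQ.2 p hv ho
  unfold gapStar
  rw [sub_nonneg]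
  apply Real.sSup_le _ hpos
  intro y hy
  rcases hy with rfl | ⟨p', hv', hlex, rfl⟩
  · exact hpos
  rcases hlex with hlt | ⟨heq1, hlt2⟩
  · exact hmax p' hv' hlt
  · have ho' : ¬ Even p'.1 := by rw [heq1]; exact ho
    rcases (hQ.2 p' hv' ho').1 with h0 | ⟨p'', hv'', hlt'', heq''⟩
    · rw [h0, dot_zero]; exact hpos
    · rw [heq'']
      exact hmax p'' hv'' (by omega)

lemma gap_nonneg (Q : ℕ × ℕ → V2) (hQ : isQstar Q) {p : ℕ × ℕ}
    (hv : validIdx p) : 0 ≤ gapStar Q p := by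
  by_cases he : Even p.1
  · obtain ⟨l, j⟩ := p
    simp only at he ⊢
    have hl : 2 ≤ l := hv.1
    have hj : j < N l + 1 := by have := hv.2; rwa [nl_eq] at this
    rcases Nat.lt_or_ge j (N l) with hjN | hjN
    · refine le_trans ?_ (gap_lb_even Q hQ hl he hjN)
      have h1 : 0 < Real.sin (((j:ℝ)+1) * θ l) := by
        have := sin_angle_pos hl (j := j+1) (by omega) (by omega)
        push_cast at this
        exact this
      have h2 : 0 ≤ Real.sin (θ l) := by
        have := sin_angle_pos hl (j := 1) le_rfl (by linarith [two_le_N hl])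
        rw [Nat.cast_one, one_mul] at this
        linarith
      have h3 := delta_nonneg l
      positivity
    · have : j = N l := by omega
      rw [this]
      exact gap_nonneg_even_last Q hQ hl he
  · exact gap_nonneg_odd Q hQ hv he


lemma norm1_eval {l j : ℕ} (hl : 2 ≤ l) (he : Even l) (hj : j ≤ N l) :
    norm1 (xstar (l, j)) = Real.cos ((j:ℝ) * θ l) + Real.sin ((j:ℝ) * θ l) := by
  rw [xstar_even he]
  unfold norm1
  rw [Fin.sum_univ_two]
  simp only [Matrix.cons_val_zero, Matrix.cons_val_one, Matrix.head_cons]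
  rw [abs_of_nonneg (cos_angle_nonneg hl hj), abs_of_nonneg (sin_angle_nonneg hl hj)]

lemma norm1_bounds {l j : ℕ} (hl : 2 ≤ l) (he : Even l) (hj : j ≤ N l) :
    1 ≤ norm1 (xstar (l, j)) ∧ norm1 (xstar (l, j)) ≤ 2 := by
  rw [norm1_eval hl he hj]
  set c := Real.cos ((j:ℝ) * θ l)
  set s := Real.sin ((j:ℝ) * θ l)
  have h1 : s^2 + c^2 = 1 := Real.sin_sq_add_cos_sq _
  have hc0 : 0 ≤ c := cos_angle_nonneg hl hj
  have hs0 : 0 ≤ s := sin_angle_nonneg hl hj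
  have hc1 : c ≤ 1 := Real.cos_le_one _
  have hs1 : s ≤ 1 := Real.sin_le_one _
  constructor
  · nlinarith
  · linarith

lemma term_lb (Q : ℕ × ℕ → V2) (hQ : isQstar Q) {l j : ℕ}
    (hl : 2 ≤ l) (he : Even l) (hj : j < N l) :
    δ l / (Real.pi * ((j:ℝ)+1)) ≤ gapStar Q (l, j) / norm1 (xstar (l, j)) := by
  obtain ⟨hn1, hn2⟩ := norm1_bounds hl he hj.le
  have hn1pos : 0 < norm1 (xstar (l, j)) := by linarith
  have hθ := theta_pos hl
  have hθhalf : θ l ≤ Real.pi / 2 := by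
    have := angle_le hl (j := 1) (by linarith [two_le_N hl])
    rwa [Nat.cast_one, one_mul] at this
  have hs1 : 0 < Real.sin (((j:ℝ)+1) * θ l) := by
    have := sin_angle_pos hl (j := j+1) (by omega) (by omega)
    push_cast at this
    exact this
  have hs1le : Real.sin (((j:ℝ)+1) * θ l) ≤ ((j:ℝ)+1) * θ l :=
    Real.sin_le (by positivity)
  have hsinθ_lb : 2 / Real.pi * θ l ≤ Real.sin (θ l) := Real.mul_le_sin hθ.le hθhalf
  have hd := delta_pos hl
  have hsinθ0 : 0 ≤ Real.sin (θ l) := le_trans (by positivity) hsinθ_lb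
  set g := δ l * Real.sin (θ l) / Real.sin (((j:ℝ)+1) * θ l) with hg_def
  have hg0 : 0 ≤ g := by positivity
  have t1 : δ l * (2 / Real.pi * θ l) / (((j:ℝ)+1) * θ l) ≤ g :=
    div_le_div₀ (by positivity) (mul_le_mul_of_nonneg_left hsinθ_lb hd.le) hs1 hs1le
  have t2 : δ l * (2 / Real.pi * θ l) / (((j:ℝ)+1) * θ l)
      = 2 * δ l / (Real.pi * ((j:ℝ)+1)) := by
    have hπ := Real.pi_pos
    have hj1 : (0:ℝ) < (j:ℝ)+1 := by positivity
    field_simp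
  have hgap := gap_lb_even Q hQ hl he hj
  calc δ l / (Real.pi * ((j:ℝ)+1)) = (2 * δ l / (Real.pi * ((j:ℝ)+1))) / 2 := by ring
  _ ≤ g / 2 := by rw [← t2]; exact (div_le_div_iff_of_pos_right (by norm_num)).2 t1
  _ ≤ g / norm1 (xstar (l, j)) := div_le_div_of_nonneg_left hg0 hn1pos hn2
  _ ≤ gapStar Q (l, j) / norm1 (xstar (l, j)) := (div_le_div_iff_of_pos_right hn1pos).2 hgap

lemma harmonic_lb : ∀ n : ℕ, Real.log ((n:ℝ)+1) ≤ ∑ j ∈ Finset.range n, 1/((j:ℝ)+1) := by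
  intro n
  induction n with
  | zero => simp
  | succ n ih =>
    rw [Finset.sum_range_succ]
    have step : Real.log ((n:ℝ)+1+1) - Real.log ((n:ℝ)+1) ≤ 1/((n:ℝ)+1) := by
      have h0 : (0:ℝ) < (n:ℝ)+1 := by positivity
      have hd : Real.log (((n:ℝ)+1+1)/((n:ℝ)+1)) = Real.log ((n:ℝ)+1+1) - Real.log ((n:ℝ)+1) :=
        Real.log_div (by positivity) (by positivity)
      have := Real.log_le_sub_one_of_pos (show (0:ℝ) < ((n:ℝ)+1+1)/((n:ℝ)+1) by positivity)
      rw [hd] at this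
      have he : ((n:ℝ)+1+1)/((n:ℝ)+1) - 1 = 1/((n:ℝ)+1) := by field_simp; ring
      linarith [he ▸ this]
    push_cast
    linarith

lemma loglog_step {k : ℕ} (hk : 2 ≤ k) :
    Real.log (Real.log ((k:ℝ)+1)) - Real.log (Real.log (k:ℝ)) ≤ 1/((k:ℝ)*Real.log (k:ℝ)) := by
  have hk1 : (1:ℝ) < k := by exact_mod_cast lt_of_lt_of_le one_lt_two hk
  have hk0 : (0:ℝ) < k := by linarith
  have ha : 0 < Real.log (k:ℝ) := Real.log_pos hk1
  have hb : 0 < Real.log ((k:ℝ)+1) := Real.log_pos (by linarith)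
  have hab : Real.log (k:ℝ) ≤ Real.log ((k:ℝ)+1) := Real.log_le_log hk0 (by linarith)
  have h1 : Real.log (Real.log ((k:ℝ)+1)) - Real.log (Real.log (k:ℝ))
      = Real.log (Real.log ((k:ℝ)+1) / Real.log (k:ℝ)) :=
    (Real.log_div (by positivity) (by positivity)).symm
  rw [h1]
  have h2 : Real.log (Real.log ((k:ℝ)+1) / Real.log (k:ℝ))
      ≤ Real.log ((k:ℝ)+1) / Real.log (k:ℝ) - 1 :=
    Real.log_le_sub_one_of_pos (by positivity)
  have h3 : Real.log ((k:ℝ)+1) / Real.log (k:ℝ) - 1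
      = (Real.log ((k:ℝ)+1) - Real.log (k:ℝ)) / Real.log (k:ℝ) := by field_simp
  have h4 : Real.log ((k:ℝ)+1) - Real.log (k:ℝ) ≤ 1/(k:ℝ) := by
    have hd : Real.log (((k:ℝ)+1)/(k:ℝ)) = Real.log ((k:ℝ)+1) - Real.log (k:ℝ) :=
      Real.log_div (by positivity) (by positivity)
    have h5 := Real.log_le_sub_one_of_pos (show (0:ℝ) < ((k:ℝ)+1)/(k:ℝ) by positivity)
    rw [hd] at h5
    have he : ((k:ℝ)+1)/(k:ℝ) - 1 = 1/(k:ℝ) := by field_simp; ring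
    linarith [he ▸ h5]
  have h6 : (Real.log ((k:ℝ)+1) - Real.log (k:ℝ)) / Real.log (k:ℝ) ≤ (1/(k:ℝ)) / Real.log (k:ℝ) :=
    (div_le_div_iff_of_pos_right ha).2 h4
  have h7 : (1/(k:ℝ)) / Real.log (k:ℝ) = 1/((k:ℝ)*Real.log (k:ℝ)) := by
    rw [div_div]
  linarith [h2, h3 ▸ h2]

lemma loglog_sum {K : ℕ} (hK : 2 ≤ K) :
    Real.log (Real.log ((K:ℝ)+1)) - Real.log (Real.log 2)
      ≤ ∑ k ∈ Finset.Icc 2 K, 1/((k:ℝ)*Real.log (k:ℝ)) := by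
  induction K, hK using Nat.le_induction with
  | base =>
    simp only [Finset.Icc_self, Finset.sum_singleton]
    have := loglog_step (k := 2) le_rfl
    push_cast at this ⊢
    linarith
  | succ K hK ih =>
    rw [Finset.sum_Icc_succ_top (by omega)]
    have := loglog_step (k := K+1) (by omega)
    push_cast at this ⊢
    linarith


lemma layer_lb (Q : ℕ × ℕ → V2) (hQ : isQstar Q) {k : ℕ} (hk : 2 ≤ k) :
    1/(4*Real.pi*α*((k:ℝ)*Real.log (k:ℝ)))
      ≤ ∑ j ∈ Finset.range (N (2*k)), gapStar Q (2*k, j) / norm1 (xstar (2*k, j)) := by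
  set l := 2*k with hl_def
  have hl : 2 ≤ l := by omega
  have he : Even l := ⟨k, by omega⟩
  have hπ := Real.pi_pos
  have hα := alpha_pos
  have hk1 : (1:ℝ) < k := by exact_mod_cast lt_of_lt_of_le one_lt_two hk
  have hk0 : (0:ℝ) < k := by linarith
  have hlk : (1:ℝ) < l := by
    have : (2:ℕ) ≤ l := hl
    exact_mod_cast lt_of_lt_of_le one_lt_two this
  have hl0 : (0:ℝ) < l := by linarith
  have hlogk := Real.log_pos hk1
  have hlogl := Real.log_pos hlk
  have step1 : ∑ j ∈ Finset.range (N l), δ l / (Real.pi * ((j:ℝ)+1))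
      ≤ ∑ j ∈ Finset.range (N l), gapStar Q (l, j) / norm1 (xstar (l, j)) := by
    apply Finset.sum_le_sum
    intro j hj
    exact term_lb Q hQ hl he (Finset.mem_range.1 hj)
  have step2 : ∑ j ∈ Finset.range (N l), δ l / (Real.pi * ((j:ℝ)+1))
      = (δ l / Real.pi) * ∑ j ∈ Finset.range (N l), 1/((j:ℝ)+1) := by
    rw [Finset.mul_sum]
    apply Finset.sum_congr rfl
    intro j _
    have : (0:ℝ) < (j:ℝ)+1 := by positivity
    field_simp
  have step3 := harmonic_lb (N l)
  have step4 : Real.log (l:ℝ) ≤ Real.log ((N l:ℝ)+1) := by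
    apply Real.log_le_log hl0
    have := l_le_N hl
    push_cast
    exact_mod_cast Nat.le_succ_of_le this
  have hd := delta_pos hl
  have step5 : (δ l / Real.pi) * Real.log (l:ℝ)
      ≤ (δ l / Real.pi) * ∑ j ∈ Finset.range (N l), 1/((j:ℝ)+1) := by
    apply mul_le_mul_of_nonneg_left (le_trans step4 step3) (by positivity)
  have e1 : (δ l / Real.pi) * Real.log (l:ℝ) = 1/(Real.pi*α*((l:ℝ)*Real.log (l:ℝ))) := by
    unfold δ
    rw [pow_two]
    field_simp
  have e2 : 1/(4*Real.pi*α*((k:ℝ)*Real.log (k:ℝ))) ≤ 1/(Real.pi*α*((l:ℝ)*Real.log (l:ℝ))) := by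
    apply one_div_le_one_div_of_le (by positivity)
    have hlog2k : Real.log (l:ℝ) ≤ 2 * Real.log (k:ℝ) := by
      have h' : (l:ℝ) ≤ (k:ℝ)^2 := by
        have h1 : (l:ℝ) = 2*(k:ℝ) := by push_cast [hl_def]; ring
        have hk2 : (2:ℝ) ≤ (k:ℝ) := by exact_mod_cast hk
        nlinarith
      calc Real.log (l:ℝ) ≤ Real.log ((k:ℝ)^2) := Real.log_le_log hl0 h'
      _ = 2 * Real.log (k:ℝ) := by rw [Real.log_pow]; push_cast; ring
    have hcast : (l:ℝ) = 2*(k:ℝ) := by push_cast [hl_def]; ring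
    have hlog2k' : Real.log (2*(k:ℝ)) ≤ 2*Real.log (k:ℝ) := by rw [← hcast]; exact hlog2k
    rw [hcast]
    have hmul : (2*(k:ℝ)) * Real.log (2*(k:ℝ)) ≤ 4*((k:ℝ)*Real.log (k:ℝ)) := by
      nlinarith [hlog2k', hk0, hlogk]
    calc Real.pi*α*(2*(k:ℝ)*Real.log (2*(k:ℝ)))
        ≤ Real.pi*α*(4*((k:ℝ)*Real.log (k:ℝ))) := by
          apply mul_le_mul_of_nonneg_left _ (by positivity)
          linarith [hmul]
    _ = 4*Real.pi*α*((k:ℝ)*Real.log (k:ℝ)) := by ring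
  calc 1/(4*Real.pi*α*((k:ℝ)*Real.log (k:ℝ))) ≤ 1/(Real.pi*α*((l:ℝ)*Real.log (l:ℝ))) := e2
  _ = (δ l / Real.pi) * Real.log (l:ℝ) := e1.symm
  _ ≤ _ := le_trans step5 (by rw [← step2]; exact step1)


/-- `MenuGap(X*,Q*) = ∞`: the partial sums of `∑ gap_{ℓ,j}/‖x_{ℓ,j}‖₁`, taken in
lexicographic order of `(ℓ,j)`, diverge to `+∞`; in particular `MenuGap(X*) = ∞`. -/
theorem stmt16 (Q : ℕ × ℕ → V2) (hQ : isQstar Q) :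
    ∀ T : ℝ, ∃ p₀ : ℕ × ℕ, ∀ p : ℕ × ℕ, lexBefore p₀ p →
      T ≤ ∑ᶠ p' ∈ {p' : ℕ × ℕ | validIdx p' ∧ lexBefore p' p},
        gapStar Q p' / norm1 (xstar p') := by
  classical
  intro T
  have hπ := Real.pi_pos
  have hα := alpha_pos
  have h4πα : (0:ℝ) < 4*Real.pi*α := by positivity
  set C := 4*Real.pi*α*T + Real.log (Real.log 2) with hC_def
  set K := max 2 ⌈Real.exp (Real.exp C)⌉₊ with hK_def
  have hK2 : 2 ≤ K := le_max_left _ _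
  have hKC : C ≤ Real.log (Real.log ((K:ℝ)+1)) := by
    have h1 : Real.exp (Real.exp C) ≤ (K:ℝ)+1 := by
      have := Nat.le_ceil (Real.exp (Real.exp C))
      have h2 : (⌈Real.exp (Real.exp C)⌉₊ : ℝ) ≤ (K:ℝ) := by
        exact_mod_cast le_max_right 2 ⌈Real.exp (Real.exp C)⌉₊
      linarith
    have h2 : Real.exp C ≤ Real.log ((K:ℝ)+1) := by
      have := Real.log_le_log (Real.exp_pos _) h1
      rwa [Real.log_exp] at this
    have h3 : Real.log (Real.exp C) ≤ Real.log (Real.log ((K:ℝ)+1)) :=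
      Real.log_le_log (Real.exp_pos _) h2
    rwa [Real.log_exp] at h3
  refine ⟨(2*K+1, 0), ?_⟩
  intro p hp
  have hp1 : 2*K+1 ≤ p.1 := by
    rcases hp with h | ⟨h, _⟩
    · exact h.le
    · omega
  set B := (Finset.range (p.1+1)).sup nl with hB_def
  set Sfin := ((Finset.range (p.1+1)) ×ˢ (Finset.range B)).filter
    (fun q => validIdx q ∧ lexBefore q p) with hS_def
  have hset : {p' : ℕ × ℕ | validIdx p' ∧ lexBefore p' p} = ↑Sfin := by
    ext q
    simp only [Set.mem_setOf_eq, hS_def, Finset.coe_filter, Finset.mem_product,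
      Finset.mem_range]
    constructor
    · rintro ⟨hv, hlex⟩
      refine ⟨⟨?_, ?_⟩, hv, hlex⟩
      · rcases hlex with h | ⟨h, _⟩ <;> omega
      · have h1 : q.1 ∈ Finset.range (p.1+1) := by
          rw [Finset.mem_range]
          rcases hlex with h | ⟨h, _⟩ <;> omega
        calc q.2 < nl q.1 := hv.2
        _ ≤ B := Finset.le_sup h1
    · rintro ⟨_, hv, hlex⟩
      exact ⟨hv, hlex⟩
  rw [hset, finsum_mem_coe_finset]
  set E := (Finset.Icc 2 K).biUnion
    (fun k => (Finset.range (N (2*k))).image (fun j => (2*k, j))) with hE_def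
  have hE_sub : E ⊆ Sfin := by
    intro q hq
    rw [hE_def, Finset.mem_biUnion] at hq
    obtain ⟨k, hk, hq⟩ := hq
    rw [Finset.mem_image] at hq
    obtain ⟨j, hj, rfl⟩ := hq
    rw [Finset.mem_range] at hj
    rw [Finset.mem_Icc] at hk
    have hv : validIdx (2*k, j) := ⟨by omega, by show j < nl (2*k); rw [nl_eq]; omega⟩
    have hlex : lexBefore (2*k, j) p := Or.inl (by omega)
    rw [hS_def, Finset.mem_filter, Finset.mem_product, Finset.mem_range, Finset.mem_range]
    refine ⟨⟨by omega, ?_⟩, hv, hlex⟩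
    have h1 : (2*k : ℕ) ∈ Finset.range (p.1+1) := by rw [Finset.mem_range]; omega
    calc j < nl (2*k) := hv.2
    _ ≤ B := Finset.le_sup h1
  have hmono : ∑ q ∈ E, gapStar Q q / norm1 (xstar q)
      ≤ ∑ q ∈ Sfin, gapStar Q q / norm1 (xstar q) := by
    apply Finset.sum_le_sum_of_subset_of_nonneg hE_sub
    intro q hq _
    rw [hS_def, Finset.mem_filter] at hq
    apply div_nonneg (gap_nonneg Q hQ hq.2.1)
    exact Finset.sum_nonneg fun t _ => abs_nonneg _
  have hdisj : (↑(Finset.Icc 2 K) : Set ℕ).PairwiseDisjoint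
      (fun k => (Finset.range (N (2*k))).image (fun j => (2*k, j))) := by
    intro a _ b _ hab
    simp only [Finset.disjoint_left, Finset.mem_image, Finset.mem_range]
    rintro ⟨x, y⟩ ⟨j, _, hj⟩ ⟨j', _, hj'⟩
    apply hab
    have h1 : 2*a = x := (Prod.mk.injEq _ _ _ _ ▸ hj).1
    have h2 : 2*b = x := (Prod.mk.injEq _ _ _ _ ▸ hj').1
    omega
  have hbi : ∑ q ∈ E, gapStar Q q / norm1 (xstar q)
      = ∑ k ∈ Finset.Icc 2 K, ∑ j ∈ Finset.range (N (2*k)),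
          gapStar Q (2*k, j) / norm1 (xstar (2*k, j)) := by
    rw [hE_def, Finset.sum_biUnion hdisj]
    apply Finset.sum_congr rfl
    intro k _
    rw [Finset.sum_image]
    intro x _ y _ hxy
    exact (Prod.mk.injEq _ _ _ _ ▸ hxy).2
  have hlayers : ∑ k ∈ Finset.Icc 2 K, 1/(4*Real.pi*α*((k:ℝ)*Real.log (k:ℝ)))
      ≤ ∑ q ∈ E, gapStar Q q / norm1 (xstar q) := by
    rw [hbi]
    apply Finset.sum_le_sum
    intro k hk
    exact layer_lb Q hQ (Finset.mem_Icc.1 hk).1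
  have hfactor : ∑ k ∈ Finset.Icc 2 K, 1/(4*Real.pi*α*((k:ℝ)*Real.log (k:ℝ)))
      = (1/(4*Real.pi*α)) * ∑ k ∈ Finset.Icc 2 K, 1/((k:ℝ)*Real.log (k:ℝ)) := by
    rw [Finset.mul_sum]
    apply Finset.sum_congr rfl
    intro k _
    rw [div_mul_div_comm, one_mul]
  have hlog := loglog_sum hK2
  have hT : T ≤ (1/(4*Real.pi*α)) * (Real.log (Real.log ((K:ℝ)+1)) - Real.log (Real.log 2)) := by
    have h1 : 4*Real.pi*α*T ≤ Real.log (Real.log ((K:ℝ)+1)) - Real.log (Real.log 2) := by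
      rw [hC_def] at hKC
      linarith
    calc T = (1/(4*Real.pi*α)) * (4*Real.pi*α*T) := by field_simp
    _ ≤ _ := mul_le_mul_of_nonneg_left h1 (by positivity)
  have h2 : (1/(4*Real.pi*α)) * (Real.log (Real.log ((K:ℝ)+1)) - Real.log (Real.log 2))
      ≤ (1/(4*Real.pi*α)) * ∑ k ∈ Finset.Icc 2 K, 1/((k:ℝ)*Real.log (k:ℝ)) :=
    mul_le_mul_of_nonneg_left hlog (by positivity)
  have h3 : (1/(4*Real.pi*α)) * ∑ k ∈ Finset.Icc 2 K, 1/((k:ℝ)*Real.log (k:ℝ))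
      ≤ ∑ q ∈ E, gapStar Q q / norm1 (xstar q) := by
    rw [← hfactor]; exact hlayers
  linarith [hT, h2, h3, hmono]


end Stmt16
end
end

section
/- Let k ≥ 1, let B ≥ 4 be a real number, and let X = (x_i)_{i=1}^N be a (finite or infinite) sequence of nonzero points in [0,1]^k. Define v_i := B^{2^i}·x_i/‖x_i‖₁ for each i, and let D be the probability distribution on ℝ_{≥0}^k assigning probability B^{−2^i} to v_i for each i and the remaining probability 1 − ∑_{i=1}^N B^{−2^i} to the zero vector. Then for every incentive-compatible, individually rational mechanism M = (q,p): ∑_{i=1}^N B^{−2^i}·p(v_i)·1[q(v_i) is parallel to v_i] ≤ AlignGap(X) + 1/B. -/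
open scoped BigOperators ENNReal NNReal

noncomputable section

namespace Stmt18

/-- Valuation / allocation vectors over `k` items. -/
abbrev V (k : ℕ) := Fin k → ℝ

/-- Dot product. -/
def dot {k : ℕ} (x y : V k) : ℝ := ∑ t, x t * y t

/-- ℓ¹ norm. -/
def norm1 {k : ℕ} (x : V k) : ℝ := ∑ t, |x t|

/-- Valid index set of a sequence of length `N` (finite or `⊤`), indices starting at 1. -/
def idx (N : ℕ∞) : Set ℕ := {i | 1 ≤ i ∧ (i : ℕ∞) ≤ N}

/-- `sgap_i^{X,C} := min_{0 ≤ j < i} x_i·(c_i x_i − c_j x_j)` (with `c_0 = 0`,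
so the `j = 0` term encodes `x_0 := 0`). -/
def sgapS {k : ℕ} (S : Set ℕ) (X : ℕ → V k) (c : ℕ → ℝ) (i : ℕ) : ℝ :=
  sInf {y | ∃ j : ℕ, (j ∈ S ∨ j = 0) ∧ j < i ∧ y = dot (X i) (c i • X i - c j • X j)}

/-- `AlignGap(X,C) := ∑_i max{0, sgap_i^{X,C}}/‖x_i‖₁` in `ℝ≥0∞`. -/
def alignGapE {k : ℕ} (S : Set ℕ) (X : ℕ → V k) (c : ℕ → ℝ) : ℝ≥0∞ :=
  ∑' i : ℕ, S.indicator (fun i => ENNReal.ofReal (max 0 (sgapS S X c i) / norm1 (X i))) i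

/-- An admissible scalar sequence: `c_0 = 0` and `c_i ∈ [0, 1/‖x_i‖_∞]` for valid `i`. -/
def admissibleC {k : ℕ} (S : Set ℕ) (X : ℕ → V k) (c : ℕ → ℝ) : Prop :=
  c 0 = 0 ∧ ∀ i ∈ S, c i ∈ Set.Icc (0:ℝ) (1 / ‖X i‖)

/-- Two vectors are parallel: one is a nonnegative multiple of the other. -/
def parallel {k : ℕ} (u v : V k) : Prop := ∃ c : ℝ, 0 ≤ c ∧ (u = c • v ∨ v = c • u)

lemma dot_nonneg' {k : ℕ} {x y : V k} (hx : ∀ t, 0 ≤ x t) (hy : ∀ t, 0 ≤ y t) :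
    0 ≤ dot x y :=
  Finset.sum_nonneg fun t _ => mul_nonneg (hx t) (hy t)

lemma dot_smul_right {k : ℕ} (x y : V k) (a : ℝ) : dot x (a • y) = a * dot x y := by
  simp [dot, Finset.mul_sum]; exact Finset.sum_congr rfl fun t _ => by ring

lemma dot_sub_right {k : ℕ} (x y z : V k) : dot x (y - z) = dot x y - dot x z := by
  simp [dot, ← Finset.sum_sub_distrib, mul_sub]

lemma dot_smul_left {k : ℕ} (x y : V k) (a : ℝ) : dot (a • x) y = a * dot x y := by
  simp [dot, Finset.mul_sum, mul_assoc]

lemma norm1_pos {k : ℕ} {x : V k} (hx : x ≠ 0) : 0 < norm1 x := by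
  have h0 : 0 ≤ norm1 x := Finset.sum_nonneg fun t _ => abs_nonneg _
  rcases h0.lt_or_eq with h | h
  · exact h
  · exfalso; apply hx; funext t
    have := (Finset.sum_eq_zero_iff_of_nonneg (fun t _ => abs_nonneg (x t))).1 h.symm t
      (Finset.mem_univ t)
    simpa [abs_eq_zero] using this

lemma norm1_smul {k : ℕ} (x : V k) {a : ℝ} (ha : 0 ≤ a) : norm1 (a • x) = a * norm1 x := by
  simp [norm1, Finset.mul_sum, abs_mul, abs_of_nonneg ha]

lemma dot_le_norm1 {k : ℕ} {x y : V k} (hx : ∀ t, 0 ≤ x t) (hy : ∀ t, y t ≤ 1) :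
    dot x y ≤ norm1 x := by
  apply Finset.sum_le_sum
  intro t _
  calc x t * y t ≤ x t * 1 := mul_le_mul_of_nonneg_left (hy t) (hx t)
    _ = x t := mul_one _
    _ ≤ |x t| := le_abs_self _

/-- error term -/
def eAux (B : ℝ) (i : ℕ) : ℝ := if 2 ≤ i then (B ^ 2 ^ (i - 1))⁻¹ else 0

lemma eAux_nonneg {B : ℝ} (hB : 0 < B) (i : ℕ) : 0 ≤ eAux B i := by
  unfold eAux; split
  · positivity
  · exact le_refl 0

lemma eAux_shift_le {B : ℝ} (hB : 4 ≤ B) (n : ℕ) :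
    eAux B (n + 2) ≤ (2 * B)⁻¹ * (1 / 2) ^ n := by
  have hB0 : (0:ℝ) < B := by linarith
  have h1 : eAux B (n + 2) = (B ^ 2 ^ (n + 1))⁻¹ := by
    unfold eAux; rw [if_pos (by omega)]; norm_num
  rw [h1]
  have hm1 : n + 1 ≤ 2 ^ (n + 1) - 1 := by
    have := Nat.lt_two_pow_self (n := n + 1); omega
  have h2 : (2:ℝ) ^ (n + 1) ≤ B ^ (2 ^ (n + 1) - 1) := by
    calc (2:ℝ) ^ (n + 1) ≤ 2 ^ (2 ^ (n + 1) - 1) :=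
          pow_le_pow_right₀ (by norm_num) hm1
      _ ≤ B ^ (2 ^ (n + 1) - 1) := pow_le_pow_left₀ (by norm_num) (by linarith) _
  have h3 : 2 * B * 2 ^ n ≤ B ^ 2 ^ (n + 1) := by
    have hsp : B ^ 2 ^ (n + 1) = B * B ^ (2 ^ (n + 1) - 1) := by
      rw [← pow_succ']
      congr 1
      have := Nat.one_le_two_pow (n := n + 1); omega
    rw [hsp]
    calc 2 * B * 2 ^ n = B * (2:ℝ) ^ (n + 1) := by rw [pow_succ]; ring
      _ ≤ B * B ^ (2 ^ (n + 1) - 1) := mul_le_mul_of_nonneg_left h2 hB0.le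
  have hpos : (0:ℝ) < 2 * B * 2 ^ n := by positivity
  have h4 := one_div_le_one_div_of_le hpos h3
  rw [one_div, one_div] at h4
  calc (B ^ 2 ^ (n + 1))⁻¹ ≤ (2 * B * 2 ^ n)⁻¹ := h4
    _ = (2 * B)⁻¹ * (1 / 2) ^ n := by
        rw [mul_inv]
        congr 1
        rw [← inv_pow]
        norm_num

lemma eAux_tsum_le {B : ℝ} (hB : 4 ≤ B) :
    (∑' i : ℕ, ENNReal.ofReal (eAux B i)) ≤ ENNReal.ofReal (1 / B) := by
  have hB0 : (0:ℝ) < B := by linarith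
  have hgeo : Summable (fun n : ℕ => (2 * B)⁻¹ * (1 / 2 : ℝ) ^ n) :=
    (summable_geometric_of_lt_one (by norm_num) (by norm_num)).mul_left _
  have h2 : Summable (fun n : ℕ => eAux B (n + 2)) :=
    Summable.of_nonneg_of_le (fun n => eAux_nonneg hB0 _) (fun n => eAux_shift_le hB n) hgeo
  have hs : Summable (eAux B) := (summable_nat_add_iff 2).1 h2
  have htail : (∑' n : ℕ, eAux B (n + 2)) ≤ 1 / B := by
    have h5 := Summable.tsum_le_tsum (fun n => eAux_shift_le hB n) h2 hgeo
    calc (∑' n : ℕ, eAux B (n + 2)) ≤ ∑' n : ℕ, (2 * B)⁻¹ * (1 / 2 : ℝ) ^ n := h5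
      _ = (2 * B)⁻¹ * (1 - 1 / 2)⁻¹ := by
          rw [tsum_mul_left, tsum_geometric_of_lt_one (by norm_num) (by norm_num)]
      _ = 1 / B := by field_simp; ring
  have heq : (∑' i : ℕ, eAux B i) = ∑' n : ℕ, eAux B (n + 2) := by
    have hs1 : Summable (fun n : ℕ => eAux B (n + 1)) := (summable_nat_add_iff 1).2 hs
    rw [Summable.tsum_eq_zero_add hs, Summable.tsum_eq_zero_add hs1]
    have e0 : eAux B 0 = 0 := by unfold eAux; norm_num
    have e1 : eAux B 1 = 0 := by unfold eAux; norm_num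
    rw [e0, e1]
    simp [add_assoc]
  rw [← ENNReal.ofReal_tsum_of_nonneg (fun n => eAux_nonneg hB0 n) hs, heq]
  exact ENNReal.ofReal_le_ofReal htail

theorem stmt18 (k : ℕ) (hk : 1 ≤ k) (B : ℝ) (hB : 4 ≤ B)
    (N : ℕ∞) (X : ℕ → V k)
    (hX : ∀ i ∈ idx N, X i ≠ 0 ∧ ∀ t, X i t ∈ Set.Icc (0:ℝ) 1)
    -- the scaled support points v_i := B^{2^i}·x_i/‖x_i‖₁
    (v : ℕ → V k) (hv : ∀ i, v i = (B ^ (2 ^ i) / norm1 (X i)) • X i)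
    -- an arbitrary incentive-compatible, individually rational mechanism
    (q : V k → V k) (p : V k → ℝ)
    (hq : ∀ u t, q u t ∈ Set.Icc (0:ℝ) 1) (hpnn : ∀ u, 0 ≤ p u)
    (hIC : ∀ u u' : V k, (∀ t, 0 ≤ u t) → (∀ t, 0 ≤ u' t) →
      dot u (q u') - p u' ≤ dot u (q u) - p u)
    (hIR : ∀ u : V k, (∀ t, 0 ≤ u t) → 0 ≤ dot u (q u) - p u) :
    -- aligned revenue of M on D is at most AlignGap(X) + 1/B
    (∑' i : ℕ, (idx N).indicator (fun i =>
        ENNReal.ofReal ((B ^ (2 ^ i))⁻¹ *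
          Set.indicator {u | parallel (q u) u} p (v i))) i) ≤
      (⨆ c : {c : ℕ → ℝ // admissibleC (idx N) X c}, alignGapE (idx N) X c.1) +
        ENNReal.ofReal (1 / B) := by
  classical
  have hB0 : (0:ℝ) < B := by linarith
  have hB1 : (1:ℝ) ≤ B := by linarith
  haveI : Nonempty (Fin k) := ⟨⟨0, hk⟩⟩
  -- choose, for every i, a coordinate where X i is maximal
  have hmax : ∀ i : ℕ, ∃ t0 : Fin k, ∀ t, X i t ≤ X i t0 := fun i => Finite.exists_max (X i)
  choose t0 ht0 using hmax
  -- basic facts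
  have hXnn : ∀ i ∈ idx N, ∀ t, 0 ≤ X i t := fun i hi t => ((hX i hi).2 t).1
  have hn1 : ∀ i ∈ idx N, 0 < norm1 (X i) := fun i hi => norm1_pos (hX i hi).1
  have ht0pos : ∀ i ∈ idx N, 0 < X i (t0 i) := by
    intro i hi
    obtain ⟨t, ht⟩ := Function.ne_iff.1 (hX i hi).1
    have hlt : 0 < X i t := lt_of_le_of_ne (hXnn i hi t) (by simpa [eq_comm] using ht)
    exact lt_of_lt_of_le hlt (ht0 i t)
  -- the scalar sequence
  set c : ℕ → ℝ := fun i =>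
    if i ∈ idx N ∧ parallel (q (v i)) (v i) then q (v i) (t0 i) / X i (t0 i) else 0 with hc
  have hcdef : ∀ i, c i =
      if i ∈ idx N ∧ parallel (q (v i)) (v i) then q (v i) (t0 i) / X i (t0 i) else 0 :=
    fun i => rfl
  have hcnn : ∀ i, 0 ≤ c i := by
    intro i
    rw [hcdef i]
    split
    case isTrue h => exact div_nonneg (hq _ _).1 (le_of_lt (ht0pos i h.1))
    case isFalse => exact le_rfl
  have hc0 : c 0 = 0 := by
    rw [hcdef 0, if_neg]
    rintro ⟨h0, -⟩
    exact absurd h0.1 (by norm_num)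
  have hvnn : ∀ i ∈ idx N, ∀ t, 0 ≤ v i t := by
    intro i hi t
    rw [hv i]
    simp only [Pi.smul_apply, smul_eq_mul]
    exact mul_nonneg (div_nonneg (by positivity) (hn1 i hi).le) (hXnn i hi t)
  -- aligned allocations are multiples of X i with coefficient c i
  have hcq : ∀ i ∈ idx N, parallel (q (v i)) (v i) → q (v i) = c i • X i := by
    intro i hi hpar
    have hα0 : 0 < B ^ 2 ^ i / norm1 (X i) := div_pos (by positivity) (hn1 i hi)
    have hex : ∃ a : ℝ, q (v i) = a • X i := by
      obtain ⟨d, hd0, hcase | hcase⟩ := hpar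
      · exact ⟨d * (B ^ 2 ^ i / norm1 (X i)), by rw [hcase, hv i, smul_smul]⟩
      · have hvne : v i ≠ 0 := by
          rw [hv i]
          intro h
          rcases smul_eq_zero.1 h with h' | h'
          · exact absurd h' (ne_of_gt hα0)
          · exact (hX i hi).1 h'
        have hd : d ≠ 0 := by
          intro h; rw [h, zero_smul] at hcase; exact hvne hcase
        refine ⟨d⁻¹ * (B ^ 2 ^ i / norm1 (X i)), ?_⟩
        have hq' : q (v i) = d⁻¹ • v i := by
          calc q (v i) = d⁻¹ • (d • q (v i)) := (inv_smul_smul₀ hd _).symm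
            _ = d⁻¹ • v i := by rw [← hcase]
        rw [hq', hv i, smul_smul]
    obtain ⟨a, ha⟩ := hex
    have hne : X i (t0 i) ≠ 0 := (ht0pos i hi).ne'
    have hct : c i = a := by
      rw [hcdef i, if_pos ⟨hi, hpar⟩, ha]
      simp only [Pi.smul_apply, smul_eq_mul]
      field_simp
    rw [hct]; exact ha
  -- admissibility
  have hadm : admissibleC (idx N) X c := by
    refine ⟨hc0, ?_⟩
    intro i hi
    refine ⟨hcnn i, ?_⟩
    have hnormpos : 0 < ‖X i‖ := norm_pos_iff.2 (hX i hi).1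
    have hnorm_le : ‖X i‖ ≤ X i (t0 i) := by
      rw [pi_norm_le_iff_of_nonneg (le_of_lt (ht0pos i hi))]
      intro t
      rw [Real.norm_eq_abs, abs_of_nonneg (hXnn i hi t)]
      exact ht0 i t
    rw [hcdef i]
    split
    case isTrue h =>
      calc q (v i) (t0 i) / X i (t0 i) ≤ 1 / X i (t0 i) :=
            (div_le_div_iff_of_pos_right (ht0pos i hi)).2 (hq _ _).2
      _ ≤ 1 / ‖X i‖ := one_div_le_one_div_of_le hnormpos hnorm_le
    case isFalse => exact one_div_nonneg.2 (norm_nonneg _)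
  -- payment at zero is zero
  have hp0 : p 0 = 0 := by
    have h := hIR 0 (fun t => le_rfl)
    have hd : dot (0 : V k) (q 0) = 0 := by simp [dot]
    rw [hd] at h
    linarith [hpnn 0]
  -- payment upper bound
  have hpub : ∀ j ∈ idx N, p (v j) ≤ B ^ 2 ^ j := by
    intro j hj
    have h1 := hIR (v j) (hvnn j hj)
    have h2 : dot (v j) (q (v j)) ≤ norm1 (v j) :=
      dot_le_norm1 (hvnn j hj) (fun t => (hq _ t).2)
    have h3 : norm1 (v j) = B ^ 2 ^ j := by
      rw [hv j, norm1_smul _ (div_nonneg (by positivity) (hn1 j hj).le)]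
      exact div_mul_cancel₀ _ (hn1 j hj).ne'
    linarith
  -- the key pointwise inequality
  have hkey : ∀ i ∈ idx N, (B ^ 2 ^ i)⁻¹ * Set.indicator {u | parallel (q u) u} p (v i)
      ≤ max 0 (sgapS (idx N) X c i) / norm1 (X i) + eAux B i := by
    intro i hi
    have hRHSnn : 0 ≤ max 0 (sgapS (idx N) X c i) / norm1 (X i) + eAux B i := by
      have h1 := div_nonneg (le_max_left 0 (sgapS (idx N) X c i)) (hn1 i hi).le
      linarith [eAux_nonneg hB0 i]
    by_cases hpar : parallel (q (v i)) (v i)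
    · rw [Set.indicator_of_mem (show v i ∈ {u | parallel (q u) u} from hpar) p]
      set T : Set ℝ :=
        {y | ∃ j : ℕ, (j ∈ idx N ∨ j = 0) ∧ j < i ∧ y = dot (X i) (c i • X i - c j • X j)}
        with hT
      have hi1 : 1 ≤ i := hi.1
      have hTne : T.Nonempty := ⟨dot (X i) (c i • X i - c 0 • X 0), 0, Or.inr rfl, hi1, rfl⟩
      have hTfin : T.Finite := by
        apply Set.Finite.subset
          (Set.Finite.image (fun j => dot (X i) (c i • X i - c j • X j)) (Set.finite_Iio i))
        rintro y ⟨j, -, hji, rfl⟩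
        exact ⟨j, hji, rfl⟩
      have hmem : sgapS (idx N) X c i ∈ T := hTne.csInf_mem hTfin
      obtain ⟨j, hjS, hji, hjeq⟩ := hmem
      have hqc : q (v i) = c i • X i := hcq i hi hpar
      have hα0 : 0 < B ^ 2 ^ i / norm1 (X i) := div_pos (by positivity) (hn1 i hi)
      -- a comparison point w
      obtain ⟨w, hwnn, hwq, hwp⟩ :
          ∃ w : V k, (∀ t, 0 ≤ w t) ∧ (c j * dot (X i) (X j) ≤ dot (X i) (q w)) ∧
            ((B ^ 2 ^ i)⁻¹ * p w ≤ eAux B i) := by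
        rcases hjS with hjS | rfl
        · refine ⟨v j, hvnn j hjS, ?_, ?_⟩
          · by_cases hparj : parallel (q (v j)) (v j)
            · rw [hcq j hjS hparj, dot_smul_right]
            · have hcj : c j = 0 := by
                rw [hcdef j, if_neg]
                rintro ⟨-, h⟩; exact hparj h
              rw [hcj, zero_mul]
              exact dot_nonneg' (hXnn i hi) (fun t => (hq _ t).1)
          · have h2i : 2 ≤ i := by
              have := hjS.1; omega
            have hjle : j ≤ i - 1 := by omega
            have e1 : eAux B i = (B ^ 2 ^ (i - 1))⁻¹ := by unfold eAux; rw [if_pos h2i]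
            have hle : B ^ 2 ^ j ≤ B ^ 2 ^ (i - 1) :=
              pow_le_pow_right₀ hB1 (Nat.pow_le_pow_right (by norm_num) hjle)
            have hsplitn : (2:ℕ) ^ (i - 1) + 2 ^ (i - 1) = 2 ^ i := by
              have hh : i - 1 + 1 = i := by omega
              calc (2:ℕ) ^ (i - 1) + 2 ^ (i - 1) = 2 ^ (i - 1) * 2 := by ring
                _ = 2 ^ (i - 1 + 1) := (pow_succ 2 (i - 1)).symm
                _ = 2 ^ i := by rw [hh]
            have hsplit : B ^ 2 ^ i = B ^ 2 ^ (i - 1) * B ^ 2 ^ (i - 1) := by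
              rw [← pow_add, hsplitn]
            have hane : (B:ℝ) ^ 2 ^ (i - 1) ≠ 0 := by positivity
            calc (B ^ 2 ^ i)⁻¹ * p (v j) ≤ (B ^ 2 ^ i)⁻¹ * B ^ 2 ^ (i - 1) :=
                  mul_le_mul_of_nonneg_left (le_trans (hpub j hjS) hle) (by positivity)
              _ = (B ^ 2 ^ (i - 1))⁻¹ := by
                  rw [hsplit, mul_inv, mul_assoc, inv_mul_cancel₀ hane, mul_one]
              _ = eAux B i := e1.symm
        · refine ⟨0, fun t => le_rfl, ?_, ?_⟩
          · rw [hc0, zero_mul]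
            exact dot_nonneg' (hXnn i hi) (fun t => (hq _ t).1)
          · rw [hp0, mul_zero]; exact eAux_nonneg hB0 i
      -- IC against w
      have hICw : p (v i) ≤ dot (v i) (q (v i)) - dot (v i) (q w) + p w := by
        have h := hIC (v i) w (hvnn i hi) hwnn
        linarith
      have hdots : ∀ u : V k, dot (v i) u = (B ^ 2 ^ i / norm1 (X i)) * dot (X i) u := by
        intro u; rw [hv i, dot_smul_left]
      have hgap : dot (X i) (c i • X i - c j • X j)
          = c i * dot (X i) (X i) - c j * dot (X i) (X j) := by
        rw [dot_sub_right, dot_smul_right, dot_smul_right]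
      have hmain : p (v i) ≤ (B ^ 2 ^ i / norm1 (X i)) * sgapS (idx N) X c i + p w := by
        rw [hjeq, hgap]
        have h1 : dot (v i) (q (v i))
            = (B ^ 2 ^ i / norm1 (X i)) * (c i * dot (X i) (X i)) := by
          rw [hdots, hqc, dot_smul_right]
        have h2 : (B ^ 2 ^ i / norm1 (X i)) * (c j * dot (X i) (X j)) ≤ dot (v i) (q w) := by
          rw [hdots]
          exact mul_le_mul_of_nonneg_left hwq hα0.le
        have h3 : (B ^ 2 ^ i / norm1 (X i)) * (c i * dot (X i) (X i) - c j * dot (X i) (X j))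
            = (B ^ 2 ^ i / norm1 (X i)) * (c i * dot (X i) (X i))
              - (B ^ 2 ^ i / norm1 (X i)) * (c j * dot (X i) (X j)) := by ring
        rw [h3]
        linarith
      have hfin : (B ^ 2 ^ i)⁻¹ * p (v i)
          ≤ sgapS (idx N) X c i / norm1 (X i) + (B ^ 2 ^ i)⁻¹ * p w := by
        have hBne : (B:ℝ) ^ 2 ^ i ≠ 0 := by positivity
        have hnne : norm1 (X i) ≠ 0 := (hn1 i hi).ne'
        have h3 : (B ^ 2 ^ i)⁻¹ * ((B ^ 2 ^ i / norm1 (X i)) * sgapS (idx N) X c i)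
            = sgapS (idx N) X c i / norm1 (X i) := by
          field_simp
        calc (B ^ 2 ^ i)⁻¹ * p (v i)
            ≤ (B ^ 2 ^ i)⁻¹ * ((B ^ 2 ^ i / norm1 (X i)) * sgapS (idx N) X c i + p w) :=
              mul_le_mul_of_nonneg_left hmain (by positivity)
          _ = sgapS (idx N) X c i / norm1 (X i) + (B ^ 2 ^ i)⁻¹ * p w := by
              rw [mul_add, h3]
      calc (B ^ 2 ^ i)⁻¹ * p (v i)
          ≤ sgapS (idx N) X c i / norm1 (X i) + (B ^ 2 ^ i)⁻¹ * p w := hfin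
        _ ≤ max 0 (sgapS (idx N) X c i) / norm1 (X i) + eAux B i :=
            add_le_add ((div_le_div_iff_of_pos_right (hn1 i hi)).2 (le_max_right _ _)) hwp
    · rw [Set.indicator_of_notMem (show v i ∉ {u | parallel (q u) u} from hpar) p, mul_zero]
      exact hRHSnn
  -- assemble
  calc (∑' i : ℕ, (idx N).indicator (fun i =>
        ENNReal.ofReal ((B ^ (2 ^ i))⁻¹ *
          Set.indicator {u | parallel (q u) u} p (v i))) i)
      ≤ ∑' i : ℕ, ((idx N).indicator
          (fun i => ENNReal.ofReal (max 0 (sgapS (idx N) X c i) / norm1 (X i))) i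
            + ENNReal.ofReal (eAux B i)) := by
        apply ENNReal.tsum_le_tsum
        intro i
        by_cases hiS : i ∈ idx N
        · rw [Set.indicator_of_mem hiS, Set.indicator_of_mem hiS]
          calc ENNReal.ofReal ((B ^ (2 ^ i))⁻¹ *
                Set.indicator {u | parallel (q u) u} p (v i))
              ≤ ENNReal.ofReal (max 0 (sgapS (idx N) X c i) / norm1 (X i) + eAux B i) :=
                ENNReal.ofReal_le_ofReal (hkey i hiS)
            _ ≤ _ + _ := ENNReal.ofReal_add_le
        · rw [Set.indicator_of_notMem hiS, Set.indicator_of_notMem hiS]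
          exact zero_le
    _ = alignGapE (idx N) X c + ∑' i : ℕ, ENNReal.ofReal (eAux B i) := ENNReal.tsum_add
    _ ≤ (⨆ c : {c : ℕ → ℝ // admissibleC (idx N) X c}, alignGapE (idx N) X c.1)
          + ENNReal.ofReal (1 / B) := by
        apply add_le_add
        · exact le_iSup_of_le ⟨c, hadm⟩ le_rfl
        · exact eAux_tsum_le hB


end Stmt18
end
end
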